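/- The Maclaurin series of κ₁(u) = (1/π)(u·(π − arccos u) + √(1−u²)) on (-1,1) is 1/π + u/2 + Σ_{n≥1} ((2n-3)!!/((2n-1)·n!·2ⁿ·π)) u^{2n}; in particular all of its Maclaurin coefficients are nonnegative. -/

import Mathlib

open Real

/-- Maclaurin coefficients of the degree-1 arc-cosine kernel κ₁. -/
noncomputable def k1Coeff : ℕ → ℝ := fun m =>
  if m = 0 then 1 / Real.pi
  else if m = 1 then 1 / 2
  else if m % 2 = 0 then
    (Nat.doubleFactorial (m - 3) : ℝ) /
      ((m - 1 : ℝ) * (Nat.factorial (m / 2)) * 2 ^ (m / 2) * Real.pi)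
  else 0

/-- The degree-1 arc-cosine kernel on [-1,1]. -/
noncomputable def k1Real (u : ℝ) : ℝ :=
  (u * (Real.pi - Real.arccos u) + Real.sqrt (1 - u ^ 2)) / Real.pi

/-- (2m-1)!! * 2^m * m! = (2m)!  (with truncated subtraction, m=0 OK). -/
lemma dfNat : ∀ m : ℕ, Nat.doubleFactorial (2*m-1) * 2^m * Nat.factorial m = Nat.factorial (2*m)
  | 0 => rfl
  | m+1 => by
    have h1 : 2*(m+1)-1 = 2*m+1 := by omega
    have h2 : Nat.doubleFactorial (2*m+1) = (2*m+1) * Nat.doubleFactorial (2*m-1) := by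
      have := Nat.doubleFactorial_add_one (2*m)
      simpa using this
    have h3 : 2*(m+1) = 2*m+1+1 := by omega
    rw [h1, h2, h3, Nat.factorial_succ, Nat.factorial_succ, Nat.factorial_succ, pow_succ]
    have IH := dfNat m
    ring_nf
    ring_nf at IH
    nlinarith [IH]

lemma cbFac (m : ℕ) : Nat.centralBinom m * (Nat.factorial m * Nat.factorial m) = Nat.factorial (2*m) := by
  have h := Nat.choose_mul_factorial_mul_factorial (show m ≤ 2*m by omega)
  have h2 : 2*m - m = m := by omega
  rw [h2] at h
  rw [Nat.centralBinom]
  linarith [h]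

/-- the df in terms of centralBinom -/
lemma dfEq (m : ℕ) : (Nat.doubleFactorial (2*m-1) : ℝ) * 2^m = Nat.centralBinom m * Nat.factorial m := by
  have h1 := dfNat m
  have h2 := cbFac m
  have h3 : Nat.doubleFactorial (2*m-1) * 2^m * Nat.factorial m
      = Nat.centralBinom m * Nat.factorial m * Nat.factorial m := by rw [h1, ← h2]; ring
  have h4 : 0 < Nat.factorial m := Nat.factorial_pos m
  have := Nat.eq_of_mul_eq_mul_right h4 h3
  exact_mod_cast congrArg (Nat.cast : ℕ → ℝ) this

noncomputable def cB (n : ℕ) : ℝ := (Nat.centralBinom n : ℝ) / 4 ^ n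

lemma cB_pos (n : ℕ) : 0 < cB n := by
  unfold cB
  have h : 0 < Nat.centralBinom n := Nat.centralBinom_pos n
  have : (0:ℝ) < Nat.centralBinom n := by exact_mod_cast h
  positivity

lemma cB_zero : cB 0 = 1 := by simp [cB, Nat.centralBinom]

lemma cB_le_one (n : ℕ) : cB n ≤ 1 := by
  rw [cB, div_le_one (by positivity)]
  have h1 : Nat.centralBinom n ≤ 4 ^ n := by
    calc Nat.centralBinom n = (2*n).choose n := rfl
      _ ≤ (2*n+1).choose n := Nat.choose_le_choose n (by omega)
      _ ≤ 4 ^ n := Nat.choose_middle_le_pow n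
  calc (Nat.centralBinom n : ℝ) ≤ ((4:ℕ)^n : ℕ) := by exact_mod_cast h1
    _ = (4:ℝ)^n := by push_cast; ring

lemma cB_rec (n : ℕ) : (2*n+2 : ℝ) * cB (n+1) = (2*n+1) * cB n := by
  have h := Nat.succ_mul_centralBinom_succ n
  have h' : ((n+1) * Nat.centralBinom (n+1) : ℝ) = 2 * (2*n+1) * Nat.centralBinom n := by
    exact_mod_cast congrArg (Nat.cast : ℕ → ℝ) h
  push_cast at h'
  rw [cB, cB]
  have h4 : (4:ℝ)^(n+1) = 4 * 4^n := by ring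
  rw [h4]
  field_simp
  nlinarith [h', pow_pos (show (0:ℝ) < 4 by norm_num) n]

lemma k1Coeff_even (m : ℕ) : k1Coeff (2*m+2) = cB m / ((2*m+1) * (2*m+2) * Real.pi) := by
  have h0 : 2*m+2 ≠ 0 := by omega
  have h1 : 2*m+2 ≠ 1 := by omega
  have h2 : (2*m+2) % 2 = 0 := by omega
  have h3 : 2*m+2-3 = 2*m-1 := by omega
  have h4 : (2*m+2)/2 = m+1 := by omega
  simp only [k1Coeff, h0, h1, h2, h3, h4, if_false, if_true, if_neg, if_pos]
  rw [cB]
  have hd := dfEq m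
  have hπ : (0:ℝ) < Real.pi := Real.pi_pos
  have hfac : (0:ℝ) < (Nat.factorial (m+1) : ℝ) := by exact_mod_cast Nat.factorial_pos (m+1)
  have hfac' : (Nat.factorial (m+1) : ℝ) = (m+1) * Nat.factorial m := by
    rw [Nat.factorial_succ]; push_cast; ring
  have hcast : ((2*m+2 : ℕ) : ℝ) - 1 = 2*(m:ℝ)+1 := by push_cast; ring
  rw [hcast, hfac']
  have h2n1 : (0:ℝ) < 2*(m:ℝ)+1 := by positivity
  have hfm : (0:ℝ) < (Nat.factorial m : ℝ) := by exact_mod_cast Nat.factorial_pos m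
  have h4m : (4:ℝ)^m = 2^m * 2^m := by rw [← mul_pow]; norm_num
  rw [pow_succ, h4m]
  push_cast
  field_simp
  linear_combination hd

lemma k1Coeff_nonneg (n : ℕ) : 0 ≤ k1Coeff n := by
  unfold k1Coeff
  have hπ := Real.pi_pos
  split_ifs with h0 h1 h2
  · positivity
  · norm_num
  · have h3 : 2 ≤ n := by omega
    have h4 : (1:ℝ) ≤ (n:ℝ) - 1 := by
      have : (2:ℝ) ≤ n := by exact_mod_cast h3
      linarith
    have hf : (0:ℝ) < (Nat.factorial (n/2) : ℝ) := by exact_mod_cast Nat.factorial_pos (n/2)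
    have hdf : (0:ℝ) ≤ (Nat.doubleFactorial (n-3) : ℝ) := by positivity
    apply div_nonneg hdf
    positivity
  · exact le_rfl

lemma k1Coeff_le_one (n : ℕ) : k1Coeff n ≤ 1 := by
  have hπ : (1:ℝ) ≤ Real.pi := by linarith [Real.pi_gt_three]
  by_cases h0 : n = 0
  · subst h0
    have : k1Coeff 0 = 1 / Real.pi := by simp [k1Coeff]
    rw [this, div_le_one (by linarith)]; exact hπ
  by_cases h1 : n = 1
  · subst h1; norm_num [k1Coeff]
  by_cases h2 : n % 2 = 0
  · obtain ⟨m, hm⟩ : ∃ m, n = 2*m+2 := ⟨n/2 - 1, by omega⟩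
    subst hm
    rw [k1Coeff_even]
    have hm0 : (0:ℝ) ≤ (m:ℝ) := Nat.cast_nonneg m
    have hge : (1:ℝ) ≤ (2*(m:ℝ)+1)*(2*(m:ℝ)+2) := by nlinarith
    have hden : (1:ℝ) ≤ (2*(m:ℝ)+1) * (2*(m:ℝ)+2) * Real.pi :=
      le_trans hπ (by nlinarith [Real.pi_pos])
    rw [div_le_one (by linarith)]
    calc cB m ≤ 1 := cB_le_one m
      _ ≤ _ := by push_cast; linarith [hden]
  · simp only [k1Coeff, if_neg h0, if_neg h1, if_neg h2]; norm_num

lemma summable_geom_aux {r : ℝ} (h0 : 0 ≤ r) (h1 : r < 1) :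
    Summable (fun n : ℕ => (n:ℝ) * r ^ n) := by
  have := summable_pow_mul_geometric_of_norm_lt_one (R := ℝ) 1
    (r := r) (by rwa [Real.norm_eq_abs, abs_of_nonneg h0])
  simpa using this

lemma const_of_hasDerivAt_zero {f : ℝ → ℝ} {r x : ℝ}
    (h : ∀ y ∈ Set.Ioo (-r) r, HasDerivAt f 0 y)
    (hx : x ∈ Set.Ioo (-r) r) (h0 : (0:ℝ) ∈ Set.Ioo (-r) r) : f x = f 0 := by
  apply Convex.is_const_of_fderivWithin_eq_zero (convex_Ioo _ _)
    (fun y hy => ((h y hy).differentiableAt).differentiableWithinAt) _ hx h0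
  intro y hy
  rw [fderivWithin_of_isOpen isOpen_Ioo hy,
    (hasDerivAt_iff_hasFDerivAt.1 (h y hy)).fderiv]
  ext t
  simp

set_option maxHeartbeats 1000000 in
lemma hasSum_invSqrt {x : ℝ} (hx : x ∈ Set.Ioo (-1:ℝ) 1) :
    HasSum (fun n : ℕ => cB n * x ^ (2*n)) (1 / Real.sqrt (1 - x^2)) := by
  obtain ⟨hx1, hx2⟩ := hx
  have hxabs : |x| < 1 := abs_lt.2 ⟨by linarith, hx2⟩
  set r : ℝ := (|x| + 1) / 2 with hrdef
  have habs0 : 0 ≤ |x| := abs_nonneg x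
  have hr0 : 0 < r := by rw [hrdef]; linarith
  have hrhalf : (1:ℝ) ≤ 2 * r := by rw [hrdef]; linarith
  have hr1 : r < 1 := by rw [hrdef]; linarith
  have hxr : |x| < r := by rw [hrdef]; linarith
  have hr2 : r^2 < 1 := by nlinarith
  have hr20 : (0:ℝ) ≤ r^2 := sq_nonneg r
  have hxs : x ∈ Set.Ioo (-r) r := by
    constructor
    · linarith [neg_abs_le x]
    · linarith [le_abs_self x]
  have h0s : (0:ℝ) ∈ Set.Ioo (-r) r := ⟨by linarith, hr0⟩
  -- master summable bound
  have hmaster : Summable (fun n : ℕ => (4*(n:ℝ)+3) * (r^2)^n) := by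
    have h1 : Summable (fun n : ℕ => (n:ℝ) * (r^2)^n) := summable_geom_aux hr20 hr2
    have h2 : Summable (fun n : ℕ => (r^2)^n) := summable_geometric_of_lt_one hr20 hr2
    have := (h1.mul_left 4).add (h2.mul_left 3)
    refine this.congr (fun n => ?_)
    ring
  have sumOf : ∀ f : ℕ → ℝ, (∀ n, |f n| ≤ (4*(n:ℝ)+3) * (r^2)^n) → Summable f := fun f hf =>
    Summable.of_norm_bounded hmaster (fun n => by rw [Real.norm_eq_abs]; exact hf n)
  -- pow bound
  have hypow : ∀ (y : ℝ), |y| ≤ r → ∀ (k n : ℕ), 2*n ≤ k → |y ^ k| ≤ (r^2)^n := by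
    intro y hy k n hkn
    rw [abs_pow]
    calc |y|^k ≤ r^k := pow_le_pow_left₀ (abs_nonneg y) hy k
      _ ≤ r^(2*n) := pow_le_pow_of_le_one hr0.le hr1.le hkn
      _ = (r^2)^n := by rw [← pow_mul]
  -- term derivatives
  have hderiv : ∀ (n : ℕ) (y : ℝ),
      HasDerivAt (fun z => cB n * z^(2*n)) (cB n * (↑(2*n) * y^(2*n-1))) y :=
    fun n y => (hasDerivAt_pow (2*n) y).const_mul (cB n)
  -- bound on derivative terms
  have hbound : ∀ (n : ℕ) (y : ℝ), y ∈ Set.Ioo (-r) r →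
      ‖cB n * (↑(2*n) * y^(2*n-1))‖ ≤ (4*(n:ℝ)+3) * (r^2)^n := by
    intro n y hy
    have hyr : |y| ≤ r := le_of_lt (abs_lt.2 ⟨by linarith [hy.1], hy.2⟩)
    rw [Real.norm_eq_abs, abs_mul, abs_mul, abs_of_nonneg (cB_pos n).le, Nat.abs_cast]
    match n with
    | 0 => simp
    | Nat.succ m =>
      have he : 2*(m+1)-1 = 2*m+1 := by omega
      rw [he]
      have e1 : cB (m+1) ≤ 1 := cB_le_one (m+1)
      have e2 : |y ^ (2*m+1)| ≤ r^(2*m+1) := by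
        rw [abs_pow]; exact pow_le_pow_left₀ (abs_nonneg y) hyr _
      have e3 : (r^2)^(m+1) = r * r^(2*m+1) := by
        rw [← pow_mul]
        rw [show 2*(m+1) = (2*m+1)+1 by ring, pow_succ]
        ring
      have e4 : (0:ℝ) ≤ r^(2*m+1) := pow_nonneg hr0.le _
      have e5 : (0:ℝ) ≤ |y ^ (2*m+1)| := abs_nonneg _
      have e6 : ((2*(m+1) : ℕ) : ℝ) = 2*(m:ℝ)+2 := by push_cast; ring
      rw [e6, e3]
      have hm0 : (0:ℝ) ≤ 2*(m:ℝ)+2 := by positivity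
      have e7 : cB (m+1) * ((2*(m:ℝ)+2) * |y ^ (2*m+1)|) ≤ (2*(m:ℝ)+2) * r^(2*m+1) := by
        have h := mul_le_mul e1 (mul_le_mul_of_nonneg_left e2 hm0) (by positivity) (by norm_num)
        simpa using h
      have e8 : (2*(m:ℝ)+2) * r^(2*m+1) ≤ (4*(m:ℝ)+4) * (r * r^(2*m+1)) := by
        nlinarith [mul_nonneg (mul_nonneg (show (0:ℝ) ≤ 2*(m:ℝ)+2 by positivity)
          (show (0:ℝ) ≤ 2*r-1 by linarith)) e4]
      have e9 : (0:ℝ) ≤ r * r^(2*m+1) := by positivity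
      have e10 : ((m:ℝ)+1) = ((Nat.succ m : ℕ) : ℝ) := by push_cast; ring
      calc cB (m+1) * ((2*(m:ℝ)+2) * |y ^ (2*m+1)|)
          ≤ (2*(m:ℝ)+2) * r^(2*m+1) := e7
        _ ≤ (4*(m:ℝ)+4) * (r * r^(2*m+1)) := e8
        _ ≤ (4*((Nat.succ m : ℕ):ℝ)+3) * (r * r^(2*m+1)) := by
            apply mul_le_mul_of_nonneg_right _ e9
            push_cast; linarith
  -- summability of the series at each point
  have hsumG : ∀ y : ℝ, |y| ≤ r → Summable (fun n => cB n * y^(2*n)) := by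
    intro y hy
    apply sumOf; intro n
    rw [abs_mul, abs_of_nonneg (cB_pos n).le]
    have h1 := hypow y hy (2*n) n (le_refl _)
    have h2 := cB_le_one n
    have h3 := (cB_pos n).le
    have h4 : (0:ℝ) ≤ (r^2)^n := pow_nonneg hr20 n
    have h5 : (0:ℝ) ≤ (n:ℝ) := Nat.cast_nonneg n
    nlinarith [abs_nonneg (y^(2*n))]
  -- derivative of the sum
  have hG : ∀ y ∈ Set.Ioo (-r) r,
      HasDerivAt (fun z => ∑' n : ℕ, cB n * z^(2*n)) (∑' n : ℕ, cB n * (↑(2*n) * y^(2*n-1))) y := by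
    intro y hy
    exact hasDerivAt_tsum_of_isPreconnected hmaster isOpen_Ioo (convex_Ioo _ _).isPreconnected
      (fun n z _ => hderiv n z) hbound h0s (hsumG 0 (by simp [hr0.le])) hy
  -- key ODE identity
  have hkey : ∀ y ∈ Set.Ioo (-r) r,
      (1 - y^2) * (∑' n : ℕ, cB n * (↑(2*n) * y^(2*n-1))) = y * ∑' n : ℕ, cB n * y^(2*n) := by
    intro y hy
    have hyr : |y| ≤ r := le_of_lt (abs_lt.2 ⟨by linarith [hy.1], hy.2⟩)
    have hb1 : ∀ (c : ℝ) (k m : ℕ), |c| ≤ 1 → 2*m ≤ k → ∀ a : ℝ, |a| ≤ 4*(m:ℝ)+3 →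
        |a * c * y^k| ≤ (4*(m:ℝ)+3) * (r^2)^m := by
      intro c k m hc hkm a ha
      have h1 := hypow y hyr k m hkm
      have h2 : (0:ℝ) ≤ (r^2)^m := pow_nonneg hr20 m
      rw [abs_mul, abs_mul]
      have hm3 : (0:ℝ) ≤ 4*(m:ℝ)+3 := by positivity
      nlinarith [abs_nonneg a, abs_nonneg c, abs_nonneg (y^k), mul_le_mul ha hc (abs_nonneg c) hm3]
    have habs_cB : ∀ n, |cB n| ≤ 1 := fun n => by
      rw [abs_of_nonneg (cB_pos n).le]; exact cB_le_one n
    have S1 : Summable (fun n : ℕ => (2*(n:ℝ)+1) * cB n * y^(2*n+1)) := by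
      apply sumOf; intro n
      exact hb1 (cB n) (2*n+1) n (habs_cB n) (by omega) _
        (by rw [abs_of_nonneg (by positivity)]; linarith [Nat.cast_nonneg (α := ℝ) n])
    have S2 : Summable (fun n : ℕ => cB n * y^(2*n+1)) := by
      apply sumOf; intro n
      have := hb1 (cB n) (2*n+1) n (habs_cB n) (by omega) 1 (by rw [abs_one]; linarith [Nat.cast_nonneg (α := ℝ) n])
      simpa using this
    have S3 : Summable (fun n : ℕ => 2*(n:ℝ) * cB n * y^(2*n+1)) := by
      apply sumOf; intro n
      exact hb1 (cB n) (2*n+1) n (habs_cB n) (by omega) _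
        (by rw [abs_of_nonneg (by positivity)]; linarith [Nat.cast_nonneg (α := ℝ) n])
    have Sd : Summable (fun n => cB n * (↑(2*n) * y^(2*n-1))) :=
      Summable.of_norm_bounded hmaster (fun n => hbound n y hy)
    have hD : (∑' n : ℕ, cB n * (↑(2*n) * y^(2*n-1))) = ∑' n : ℕ, (2*(n:ℝ)+1) * cB n * y^(2*n+1) := by
      rw [Summable.tsum_eq_zero_add Sd]
      have h0 : cB 0 * (((2*0 : ℕ) : ℝ) * y^(2*0-1)) = 0 := by norm_num
      rw [h0, zero_add]
      apply tsum_congr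
      intro n
      have he : 2*(n+1)-1 = 2*n+1 := by omega
      rw [he]
      have hrec := cB_rec n
      push_cast
      linear_combination y^(2*n+1) * hrec
    have hyG : y * (∑' n : ℕ, cB n * y^(2*n)) = ∑' n : ℕ, cB n * y^(2*n+1) := by
      rw [← tsum_mul_left]
      apply tsum_congr; intro n; rw [pow_succ]; ring
    have hsub : (∑' n : ℕ, (2*(n:ℝ)+1) * cB n * y^(2*n+1)) - ∑' n : ℕ, cB n * y^(2*n+1)
        = ∑' n : ℕ, 2*(n:ℝ) * cB n * y^(2*n+1) := by
      rw [← Summable.tsum_sub S1 S2]; apply tsum_congr; intro n; ring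
    have hshift : (∑' n : ℕ, 2*(n:ℝ) * cB n * y^(2*n+1))
        = y^2 * ∑' n : ℕ, (2*(n:ℝ)+1) * cB n * y^(2*n+1) := by
      rw [← tsum_mul_left, Summable.tsum_eq_zero_add S3]
      rw [show 2*((0:ℕ):ℝ) * cB 0 * y^(2*0+1) = 0 by norm_num, zero_add]
      apply tsum_congr; intro n
      have hrec := cB_rec n
      have hp : y^(2*(n+1)+1) = y^2 * y^(2*n+1) := by
        rw [show 2*(n+1)+1 = (2*n+1)+2 by ring, pow_add]; ring
      push_cast
      rw [hp]
      linear_combination (y^2 * y^(2*n+1)) * hrec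
    rw [hD, hyG]
    linear_combination hsub + hshift
  -- sqrt derivative
  have hsq_pos : ∀ y ∈ Set.Ioo (-r) r, (0:ℝ) < 1 - y^2 := by
    intro y hy
    have hyr : |y| < 1 := lt_trans (abs_lt.2 ⟨by linarith [hy.1], hy.2⟩) hr1
    nlinarith [sq_abs y, abs_nonneg y]
  have hsqrt_deriv : ∀ y ∈ Set.Ioo (-r) r,
      HasDerivAt (fun z => Real.sqrt (1 - z^2)) (-y / Real.sqrt (1-y^2)) y := by
    intro y hy
    have hy2 := hsq_pos y hy
    have hs0 : (0:ℝ) < Real.sqrt (1-y^2) := Real.sqrt_pos.2 hy2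
    have h1 : HasDerivAt (fun z : ℝ => 1 - z^2) (-(2*y)) y := by
      simpa using ((hasDerivAt_pow 2 y).const_sub 1)
    have h2 := (Real.hasDerivAt_sqrt (ne_of_gt hy2)).comp y h1
    refine h2.congr_deriv ?_
    field_simp
  -- H has derivative 0
  have hH : ∀ y ∈ Set.Ioo (-r) r,
      HasDerivAt (fun z => (∑' n : ℕ, cB n * z^(2*n)) * Real.sqrt (1 - z^2)) 0 y := by
    intro y hy
    have hy2 := hsq_pos y hy
    have hs0 : (0:ℝ) < Real.sqrt (1-y^2) := Real.sqrt_pos.2 hy2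
    have hsq : Real.sqrt (1-y^2) * Real.sqrt (1-y^2) = 1 - y^2 := Real.mul_self_sqrt hy2.le
    have hkey' := hkey y hy
    set A := ∑' n : ℕ, cB n * (↑(2*n) * y^(2*n-1)) with hA
    set B := ∑' n : ℕ, cB n * y^(2*n) with hB
    have hmul := (hG y hy).mul (hsqrt_deriv y hy)
    refine hmul.congr_deriv ?_
    have h1 : A * Real.sqrt (1-y^2) = (1-y^2) * A / Real.sqrt (1-y^2) := by
      rw [eq_div_iff hs0.ne']
      linear_combination A * hsq
    have h2 : B * (-y / Real.sqrt (1-y^2)) = -(y*B) / Real.sqrt (1-y^2) := by ring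
    rw [h1, h2, ← add_div, hkey']
    simp
  -- constancy
  have hconst := const_of_hasDerivAt_zero hH hxs h0s
  have hG0 : (∑' n : ℕ, cB n * (0:ℝ)^(2*n)) = 1 := by
    rw [tsum_eq_single 0]
    · norm_num [cB_zero]
    · intro n hn
      rw [zero_pow (by omega : 2*n ≠ 0), mul_zero]
  have hx2pos : (0:ℝ) < 1 - x^2 := hsq_pos x hxs
  have hsx : (0:ℝ) < Real.sqrt (1-x^2) := Real.sqrt_pos.2 hx2pos
  have hval : (∑' n : ℕ, cB n * x^(2*n)) = 1 / Real.sqrt (1-x^2) := by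
    rw [eq_div_iff hsx.ne']
    rw [hconst, hG0]
    norm_num
  have hs := hsumG x hxr.le
  have := hs.hasSum
  rwa [hval] at this

set_option maxHeartbeats 1000000 in
lemma hasSum_arcsin {x : ℝ} (hx : x ∈ Set.Ioo (-1:ℝ) 1) :
    HasSum (fun n : ℕ => cB n / (2*n+1) * x ^ (2*n+1)) (Real.arcsin x) := by
  obtain ⟨hx1, hx2⟩ := hx
  have hxabs : |x| < 1 := abs_lt.2 ⟨by linarith, hx2⟩
  set r : ℝ := (|x| + 1) / 2 with hrdef
  have habs0 : 0 ≤ |x| := abs_nonneg x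
  have hr0 : 0 < r := by rw [hrdef]; linarith
  have hr1 : r < 1 := by rw [hrdef]; linarith
  have hxr : |x| < r := by rw [hrdef]; linarith
  have hr2 : r^2 < 1 := by nlinarith
  have hr20 : (0:ℝ) ≤ r^2 := sq_nonneg r
  have hxs : x ∈ Set.Ioo (-r) r := by
    constructor
    · linarith [neg_abs_le x]
    · linarith [le_abs_self x]
  have h0s : (0:ℝ) ∈ Set.Ioo (-r) r := ⟨by linarith, hr0⟩
  have hsub : Set.Ioo (-r) r ⊆ Set.Ioo (-1:ℝ) 1 := by
    intro y hy
    exact ⟨by linarith [hy.1], by linarith [hy.2]⟩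
  have hgeom : Summable (fun n : ℕ => (r^2)^n) := summable_geometric_of_lt_one hr20 hr2
  -- term derivatives
  have hderiv : ∀ (n : ℕ) (y : ℝ),
      HasDerivAt (fun z => cB n / (2*n+1) * z^(2*n+1)) (cB n * y^(2*n)) y := by
    intro n y
    have h := (hasDerivAt_pow (2*n+1) y).const_mul (cB n / (2*n+1))
    refine h.congr_deriv ?_
    have h1 : ((2*n+1 : ℕ) : ℝ) = 2*(n:ℝ)+1 := by push_cast; ring
    have h2 : 2*n+1-1 = 2*n := by omega
    rw [h1, h2]
    have h3 : (2*(n:ℝ)+1) ≠ 0 := by positivity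
    field_simp
  -- bound
  have hbound : ∀ (n : ℕ), ∀ y ∈ Set.Ioo (-r) r, ‖cB n * y^(2*n)‖ ≤ (r^2)^n := by
    intro n y hy
    have hyr : |y| ≤ r := le_of_lt (abs_lt.2 ⟨by linarith [hy.1], hy.2⟩)
    rw [Real.norm_eq_abs, abs_mul, abs_of_nonneg (cB_pos n).le, abs_pow]
    have h1 : |y|^(2*n) ≤ r^(2*n) := pow_le_pow_left₀ (abs_nonneg y) hyr _
    have h2 : r^(2*n) = (r^2)^n := by rw [← pow_mul]
    have h3 := cB_le_one n
    have h4 : (0:ℝ) ≤ |y|^(2*n) := by positivity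
    nlinarith [pow_nonneg hr20 n]
  -- summability of A-terms everywhere on the interval
  have hsumA : ∀ y : ℝ, |y| ≤ r → Summable (fun n : ℕ => cB n / (2*n+1) * y^(2*n+1)) := by
    intro y hy
    apply Summable.of_norm_bounded hgeom
    intro n
    rw [Real.norm_eq_abs, abs_mul, abs_div, abs_of_nonneg (cB_pos n).le, abs_pow]
    have h1 : |y|^(2*n+1) ≤ r^(2*n+1) := pow_le_pow_left₀ (abs_nonneg y) hy _
    have h2 : r^(2*n+1) ≤ r^(2*n) := pow_le_pow_of_le_one hr0.le hr1.le (by omega)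
    have h3 : r^(2*n) = (r^2)^n := by rw [← pow_mul]
    have h4 : |(2*(n:ℝ)+1)| = 2*(n:ℝ)+1 := abs_of_nonneg (by positivity)
    have h5 : cB n / (2*(n:ℝ)+1) ≤ 1 := by
      rw [div_le_one (by positivity)]
      calc cB n ≤ 1 := cB_le_one n
        _ ≤ 2*(n:ℝ)+1 := by linarith [Nat.cast_nonneg (α := ℝ) n]
    have h6 : (0:ℝ) ≤ cB n / (2*(n:ℝ)+1) :=
      div_nonneg (cB_pos n).le (by positivity)
    calc cB n / |2*(n:ℝ)+1| * |y|^(2*n+1) ≤ cB n / |2*(n:ℝ)+1| * r^(2*n+1) := by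
          apply mul_le_mul_of_nonneg_left h1
          rw [h4]; exact h6
      _ ≤ 1 * r^(2*n+1) := by
          apply mul_le_mul_of_nonneg_right _ (by positivity)
          rw [h4]; exact h5
      _ = r^(2*n+1) := one_mul _
      _ ≤ (r^2)^n := by rw [← h3]; exact h2
  -- derivative of the sum
  have hA : ∀ y ∈ Set.Ioo (-r) r,
      HasDerivAt (fun z => ∑' n : ℕ, cB n / (2*n+1) * z^(2*n+1)) (∑' n : ℕ, cB n * y^(2*n)) y := by
    intro y hy
    exact hasDerivAt_tsum_of_isPreconnected hgeom isOpen_Ioo (convex_Ioo _ _).isPreconnected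
      (fun n z _ => hderiv n z) hbound h0s (hsumA 0 (by simp [hr0.le])) hy
  -- difference with arcsin has zero derivative
  have hdiff : ∀ y ∈ Set.Ioo (-r) r,
      HasDerivAt (fun z => (∑' n : ℕ, cB n / (2*n+1) * z^(2*n+1)) - Real.arcsin z) 0 y := by
    intro y hy
    have hy1 : y ≠ -1 := by intro h; subst h; linarith [hy.1, hr1]
    have hy2 : y ≠ 1 := by intro h; subst h; linarith [hy.2, hr1]
    have harc := Real.hasDerivAt_arcsin hy1 hy2
    have hval : (∑' n : ℕ, cB n * y^(2*n)) = 1 / Real.sqrt (1 - y^2) :=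
      (hasSum_invSqrt (hsub hy)).tsum_eq
    have := (hA y hy).sub harc
    rw [hval, sub_self] at this
    exact this
  -- conclude equality at x
  have hconst := const_of_hasDerivAt_zero hdiff hxs h0s
  have hzero : (∑' n : ℕ, cB n / (2*n+1) * (0:ℝ)^(2*n+1)) = 0 := by
    have : ∀ n : ℕ, cB n / (2*n+1) * (0:ℝ)^(2*n+1) = 0 := by
      intro n
      rw [zero_pow (by omega : 2*n+1 ≠ 0), mul_zero]
    rw [tsum_congr this]
    exact tsum_zero
  rw [hzero, Real.arcsin_zero, sub_zero, sub_eq_zero] at hconst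
  have hs := hsumA x hxr.le
  have := hs.hasSum
  rwa [hconst] at this

lemma hasDerivAt_sqrt_one_sub_sq {y : ℝ} (hy : y^2 < 1) :
    HasDerivAt (fun z : ℝ => Real.sqrt (1-z^2)) (-y / Real.sqrt (1-y^2)) y := by
  have hy2 : (0:ℝ) < 1 - y^2 := by linarith
  have hs0 : (0:ℝ) < Real.sqrt (1-y^2) := Real.sqrt_pos.2 hy2
  have h1 : HasDerivAt (fun z : ℝ => 1 - z^2) (-(2*y)) y := by
    simpa using ((hasDerivAt_pow 2 y).const_sub 1)
  have h2 := (Real.hasDerivAt_sqrt (ne_of_gt hy2)).comp y h1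
  refine h2.congr_deriv ?_
  field_simp

set_option maxHeartbeats 1000000 in
lemma k1_eq_tsum {u : ℝ} (hu : u ∈ Set.Ioo (-1:ℝ) 1) :
    k1Real u = ∑' n : ℕ, k1Coeff n * u ^ n := by
  obtain ⟨hu1, hu2⟩ := hu
  have hπ : (0:ℝ) < Real.pi := Real.pi_pos
  have hxabs : |u| < 1 := abs_lt.2 ⟨by linarith, hu2⟩
  set r : ℝ := (|u| + 1) / 2 with hrdef
  have habs0 : 0 ≤ |u| := abs_nonneg u
  have hr0 : 0 < r := by rw [hrdef]; linarith
  have hrhalf : (1:ℝ) ≤ 2 * r := by rw [hrdef]; linarith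
  have hr1 : r < 1 := by rw [hrdef]; linarith
  have hxr : |u| < r := by rw [hrdef]; linarith
  have hxs : u ∈ Set.Ioo (-r) r := by
    constructor
    · linarith [neg_abs_le u]
    · linarith [le_abs_self u]
  have h0s : (0:ℝ) ∈ Set.Ioo (-r) r := ⟨by linarith, hr0⟩
  have hsub : Set.Ioo (-r) r ⊆ Set.Ioo (-1:ℝ) 1 := by
    intro y hy
    exact ⟨by linarith [hy.1], by linarith [hy.2]⟩
  have hgeom : Summable (fun n : ℕ => r^n) := summable_geometric_of_lt_one hr0.le hr1
  have hmaster : Summable (fun n : ℕ => (2*(n:ℝ)+3) * r^n) := by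
    have h1 := summable_geom_aux hr0.le hr1
    have := (h1.mul_left 2).add (hgeom.mul_left 3)
    refine this.congr (fun n => ?_)
    ring
  -- term derivatives
  have hderiv : ∀ (n : ℕ) (y : ℝ),
      HasDerivAt (fun z => k1Coeff n * z^n) (k1Coeff n * (↑n * y^(n-1))) y :=
    fun n y => (hasDerivAt_pow n y).const_mul (k1Coeff n)
  -- bounds
  have hbound : ∀ (n : ℕ), ∀ y ∈ Set.Ioo (-r) r,
      ‖k1Coeff n * (↑n * y^(n-1))‖ ≤ (2*(n:ℝ)+3) * r^n := by
    intro n y hy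
    have hyr : |y| ≤ r := le_of_lt (abs_lt.2 ⟨by linarith [hy.1], hy.2⟩)
    rw [Real.norm_eq_abs, abs_mul, abs_mul, abs_of_nonneg (k1Coeff_nonneg n), Nat.abs_cast]
    match n with
    | 0 => simp
    | Nat.succ m =>
      have e1 : k1Coeff (m+1) ≤ 1 := k1Coeff_le_one (m+1)
      have e2 : |y ^ (m+1-1)| ≤ r^m := by
        rw [show m+1-1 = m by omega, abs_pow]
        exact pow_le_pow_left₀ (abs_nonneg y) hyr _
      have e4 : (0:ℝ) ≤ r^m := pow_nonneg hr0.le _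
      have e7 : k1Coeff (m+1) * (((m+1 : ℕ):ℝ) * |y ^ (m+1-1)|) ≤ ((m:ℝ)+1) * r^m := by
        have hm0 : (0:ℝ) ≤ ((m+1 : ℕ):ℝ) := by positivity
        have h := mul_le_mul e1 (mul_le_mul_of_nonneg_left e2 hm0) (by positivity) (by norm_num)
        rw [one_mul] at h
        exact h.trans_eq (by push_cast; ring)
      calc k1Coeff (m+1) * (((m+1:ℕ):ℝ) * |y ^ (m+1-1)|)
            ≤ ((m:ℝ)+1) * r^m := e7
        _ ≤ (2*((Nat.succ m : ℕ):ℝ)+3) * r^(m+1) := by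
            have key : ((m:ℝ)+1) * r^m * 1 ≤ ((m:ℝ)+1) * r^m * (2*r) :=
              mul_le_mul_of_nonneg_left hrhalf (by positivity)
            push_cast
            rw [pow_succ]
            nlinarith [key, mul_nonneg e4 hr0.le, Nat.cast_nonneg (α := ℝ) m]
  -- summability of the series itself
  have hsumS : ∀ y : ℝ, |y| ≤ r → Summable (fun n : ℕ => k1Coeff n * y^n) := by
    intro y hy
    apply Summable.of_norm_bounded hgeom
    intro n
    rw [Real.norm_eq_abs, abs_mul, abs_of_nonneg (k1Coeff_nonneg n), abs_pow]
    have h1 : |y|^n ≤ r^n := pow_le_pow_left₀ (abs_nonneg y) hy _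
    have h2 := k1Coeff_le_one n
    have h3 := k1Coeff_nonneg n
    nlinarith [pow_nonneg (abs_nonneg y) n, pow_nonneg hr0.le n]
  -- derivative of the sum
  have hS : ∀ y ∈ Set.Ioo (-r) r,
      HasDerivAt (fun z => ∑' n : ℕ, k1Coeff n * z^n)
        (∑' n : ℕ, k1Coeff n * (↑n * y^(n-1))) y := by
    intro y hy
    exact hasDerivAt_tsum_of_isPreconnected hmaster isOpen_Ioo (convex_Ioo _ _).isPreconnected
      (fun n z _ => hderiv n z) hbound h0s (hsumS 0 (by simp [hr0.le])) hy
  -- value of the derivative series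
  have hDval : ∀ y ∈ Set.Ioo (-r) r,
      (∑' n : ℕ, k1Coeff n * (↑n * y^(n-1))) = 1/2 + Real.arcsin y / Real.pi := by
    intro y hy
    have Sd : Summable (fun n : ℕ => k1Coeff n * (↑n * y^(n-1))) :=
      Summable.of_norm_bounded hmaster (fun n => hbound n y hy)
    set i : ℕ → ℕ := fun m => if m = 0 then 1 else 2*m with hidef
    have hinj : Function.Injective i := by
      intro a b hab
      by_cases ha : a = 0 <;> by_cases hb : b = 0 <;>
        simp [hidef, ha, hb] at hab ⊢ <;> omega
    have hzero' : ∀ n ∉ Set.range i, k1Coeff n * ((n:ℝ) * y^(n-1)) = 0 := by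
      intro n hn
      by_cases h0 : n = 0
      · subst h0; simp
      by_cases h1 : n = 1
      · exact absurd ⟨0, by simp [hidef, h1.symm]⟩ hn
      by_cases h2 : n % 2 = 0
      · exfalso
        apply hn
        refine ⟨n/2, ?_⟩
        rw [hidef]
        show (if n/2 = 0 then 1 else 2*(n/2)) = n
        rw [if_neg (by omega)]
        omega
      · have : k1Coeff n = 0 := by simp [k1Coeff, h0, h1, h2]
        rw [this, zero_mul]
    have hsupp : Function.support (fun n : ℕ => k1Coeff n * ((n:ℝ) * y^(n-1))) ⊆ Set.range i :=
      Function.support_subset_iff'.2 hzero'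
    have hterm : ∀ m : ℕ, k1Coeff (i (m+1)) * (↑(i (m+1)) * y^(i (m+1)-1))
        = (1/Real.pi) * (cB m/(2*(m:ℝ)+1) * y^(2*m+1)) := by
      intro m
      have hi : i (m+1) = 2*m+2 := by
        rw [hidef]
        show (if m+1 = 0 then 1 else 2*(m+1)) = 2*m+2
        rw [if_neg (Nat.succ_ne_zero m)]
        omega
      rw [hi, k1Coeff_even]
      have hc1 : ((2*m+2 : ℕ) : ℝ) = 2*(m:ℝ)+2 := by push_cast; ring
      have hc2 : 2*m+2-1 = 2*m+1 := by omega
      rw [hc1, hc2]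
      have h2n1 : (2*(m:ℝ)+1) ≠ 0 := by positivity
      have h2n2 : (2*(m:ℝ)+2) ≠ 0 := by positivity
      field_simp
    have hy' : y ∈ Set.Ioo (-1:ℝ) 1 := hsub hy
    calc (∑' n : ℕ, k1Coeff n * (↑n * y^(n-1)))
        = ∑' m : ℕ, k1Coeff (i m) * (↑(i m) * y^(i m-1)) := (hinj.tsum_eq hsupp).symm
      _ = k1Coeff (i 0) * (↑(i 0) * y^(i 0-1))
          + ∑' m : ℕ, k1Coeff (i (m+1)) * (↑(i (m+1)) * y^(i (m+1)-1)) :=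
          Summable.tsum_eq_zero_add (Sd.comp_injective hinj)
      _ = 1/2 + Real.arcsin y / Real.pi := by
          congr 1
          · have : i 0 = 1 := by simp [hidef]
            rw [this]
            norm_num [k1Coeff]
          · rw [tsum_congr hterm, tsum_mul_left, (hasSum_arcsin hy').tsum_eq]
            ring
  -- derivative of k1Real
  have hK : ∀ y ∈ Set.Ioo (-r) r, HasDerivAt k1Real (1/2 + Real.arcsin y / Real.pi) y := by
    intro y hy
    have hy1 : y ≠ -1 := by intro h; rw [h] at hy; have := hy.1; linarith
    have hy2 : y ≠ 1 := by intro h; rw [h] at hy; have := hy.2; linarith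
    have hyy : y^2 < 1 := by
      have h1 : |y| < 1 := lt_trans (abs_lt.2 ⟨by linarith [hy.1], hy.2⟩) hr1
      nlinarith [sq_abs y, abs_nonneg y]
    have hs0 : (0:ℝ) < Real.sqrt (1-y^2) := Real.sqrt_pos.2 (by linarith)
    have h1 := Real.hasDerivAt_arccos hy1 hy2
    have h2 : HasDerivAt (fun z => Real.pi - Real.arccos z) (1/Real.sqrt (1-y^2)) y := by
      simpa using h1.const_sub Real.pi
    have h4 := (hasDerivAt_id y).mul h2
    have h5 := hasDerivAt_sqrt_one_sub_sq hyy
    have h6 := (h4.add h5).div_const Real.pi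
    have harc : Real.arccos y = Real.pi/2 - Real.arcsin y :=
      Real.arccos_eq_pi_div_two_sub_arcsin y
    refine h6.congr_deriv ?_
    rw [harc]
    field_simp
    simp only [id]
    ring
  -- conclude
  have hzero : ∀ y ∈ Set.Ioo (-r) r,
      HasDerivAt (fun z => (∑' n : ℕ, k1Coeff n * z^n) - k1Real z) 0 y := by
    intro y hy
    have := (hS y hy).sub (hK y hy)
    rw [hDval y hy, sub_self] at this
    exact this
  have hconst := const_of_hasDerivAt_zero hzero hxs h0s
  have hS0 : (∑' n : ℕ, k1Coeff n * (0:ℝ)^n) = 1/Real.pi := by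
    rw [tsum_eq_single 0]
    · simp [k1Coeff]
    · intro n hn
      rw [zero_pow hn, mul_zero]
  have hk0 : k1Real 0 = 1/Real.pi := by
    simp [k1Real]
  rw [hS0, hk0, sub_self] at hconst
  rw [sub_eq_zero] at hconst
  exact hconst.symm

theorem k1_maclaurin_series :
    (∀ u ∈ Set.Ioo (-1 : ℝ) 1, k1Real u = ∑' n : ℕ, k1Coeff n * u ^ n) ∧
    (∀ n : ℕ, 0 ≤ k1Coeff n) := by
  exact ⟨fun u hu => k1_eq_tsum hu, k1Coeff_nonneg⟩
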